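/- Let n ≥ 1, m ≥ 1, and M > 0. Let B_0 = c·I ∈ ℝ^{n×n} with 0 < c ≤ M, and for j = 1,…,m define B_j := B_{j−1} − B_{j−1}s_j s_jᵀ B_{j−1}/(s_jᵀ B_{j−1} s_j) + y_j y_jᵀ/(y_jᵀ s_j), where s_j ≠ 0, s_jᵀ y_j > 0, and ‖y_j‖²/(y_jᵀ s_j) ≤ M for each j. Then each B_j is symmetric positive definite and Trace(B_m) ≤ (m+n)·M; consequently the largest eigenvalue of B_m is at most (m+n)·M. -/

import Mathlib

open Matrix

lemma myDotSelfNonneg {n : ℕ} (v : Fin n → ℝ) : 0 ≤ v ⬝ᵥ v :=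
  Finset.sum_nonneg fun i _ => mul_self_nonneg _

lemma myVecMulVecMulVec {n : ℕ} (u v x : Fin n → ℝ) :
    (vecMulVec u v) *ᵥ x = (v ⬝ᵥ x) • u := by
  funext i
  simp [mulVec, vecMulVec, dotProduct, Finset.mul_sum, mul_comm, mul_left_comm]

lemma myTraceVecMulVec {n : ℕ} (u v : Fin n → ℝ) :
    (vecMulVec u v).trace = u ⬝ᵥ v := by
  simp [trace, vecMulVec, dotProduct, diag]

lemma mySymmDot {n : ℕ} {P : Matrix (Fin n) (Fin n) ℝ} (hP : P.IsHermitian)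
    (u v : Fin n → ℝ) : u ⬝ᵥ P *ᵥ v = v ⬝ᵥ P *ᵥ u := by
  rw [dotProduct_mulVec, dotProduct_comm]
  congr 1
  funext j
  have := congrFun (congrFun hP.eq j)
  simp only [conjTranspose_apply, star_trivial] at this
  simp [vecMul, mulVec, dotProduct]
  exact Finset.sum_congr rfl fun k _ => by rw [← this k, mul_comm]

lemma myVecMulEq {n : ℕ} {P : Matrix (Fin n) (Fin n) ℝ} (hP : P.IsHermitian)
    (v : Fin n → ℝ) : v ᵥ* P = P *ᵥ v := by
  funext j
  have := fun k => congrFun (congrFun hP.eq j) k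
  simp only [conjTranspose_apply, star_trivial] at this
  simp [vecMul, mulVec, dotProduct]
  exact Finset.sum_congr rfl fun k _ => by rw [← this k, mul_comm]

/-- The BFGS update of a positive definite matrix. -/
noncomputable def bfgsUpd {n : ℕ} (P : Matrix (Fin n) (Fin n) ℝ) (s y : Fin n → ℝ) :
    Matrix (Fin n) (Fin n) ℝ :=
  P - (1 / (s ⬝ᵥ P *ᵥ s)) • vecMulVec (P *ᵥ s) (P *ᵥ s)
    + (1 / (y ⬝ᵥ s)) • vecMulVec y y

lemma myQuadForm {n : ℕ} (P : Matrix (Fin n) (Fin n) ℝ) (s y x : Fin n → ℝ) :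
    x ⬝ᵥ (bfgsUpd P s y) *ᵥ x
      = x ⬝ᵥ P *ᵥ x - (1 / (s ⬝ᵥ P *ᵥ s)) * ((x ⬝ᵥ (P *ᵥ s)) * ((P *ᵥ s) ⬝ᵥ x))
        + (1 / (y ⬝ᵥ s)) * ((x ⬝ᵥ y) * (y ⬝ᵥ x)) := by
  simp [bfgsUpd, sub_mulVec, add_mulVec, smul_mulVec, dotProduct_sub, dotProduct_add,
    dotProduct_smul, myVecMulVecMulVec, smul_eq_mul]
  ring

lemma bfgs_posDef {n : ℕ} {P : Matrix (Fin n) (Fin n) ℝ} (hP : P.PosDef)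
    {s y : Fin n → ℝ} (hs : s ≠ 0) (hsy : 0 < y ⬝ᵥ s) :
    (bfgsUpd P s y).PosDef := by
  have hquad : ∀ v : Fin n → ℝ, v ≠ 0 → 0 < v ⬝ᵥ P *ᵥ v := by
    intro v hv
    have := hP.dotProduct_mulVec_pos hv
    simpa using this
  have ha : 0 < s ⬝ᵥ P *ᵥ s := hquad s hs
  have ha' : (s ⬝ᵥ P *ᵥ s) ≠ 0 := ne_of_gt ha
  refine Matrix.PosDef.of_dotProduct_mulVec_pos ?_ ?_
  · -- Hermitian
    have hp : ∀ i j, P j i = P i j := fun i j => by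
      have := congrFun (congrFun hP.1.eq i) j
      simpa [conjTranspose_apply] using this
    ext i j
    simp only [bfgsUpd, conjTranspose_apply, Matrix.sub_apply, Matrix.add_apply, Matrix.smul_apply,
      vecMulVec_apply, smul_eq_mul, star_trivial]
    rw [hp i j]
    ring
  · intro x hx
    simp only [star_trivial]
    rw [myQuadForm]
    set a := s ⬝ᵥ P *ᵥ s with hadef
    set l := (x ⬝ᵥ P *ᵥ s) / a with hldef
    set u := x - l • s with hudef
    have hxPs : (P *ᵥ s) ⬝ᵥ x = x ⬝ᵥ (P *ᵥ s) := dotProduct_comm _ _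
    have hsPx : s ⬝ᵥ P *ᵥ x = x ⬝ᵥ P *ᵥ s := mySymmDot hP.1 s x
    have hu : u ⬝ᵥ P *ᵥ u = x ⬝ᵥ P *ᵥ x - (x ⬝ᵥ P *ᵥ s) ^ 2 / a := by
      simp only [hudef, sub_dotProduct, smul_dotProduct, mulVec_sub, mulVec_smul,
        dotProduct_sub, dotProduct_smul, smul_eq_mul]
      rw [hsPx, hldef]
      field_simp
      ring
    have key : x ⬝ᵥ P *ᵥ x - 1 / a * (x ⬝ᵥ (P *ᵥ s) * ((P *ᵥ s) ⬝ᵥ x))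
        = u ⬝ᵥ P *ᵥ u := by
      rw [hu, hxPs]; field_simp
    rw [key]
    have hyx : 0 ≤ 1 / (y ⬝ᵥ s) * (x ⬝ᵥ y * (y ⬝ᵥ x)) := by
      rw [dotProduct_comm x y]
      have : (y ⬝ᵥ x) * (y ⬝ᵥ x) = (y ⬝ᵥ x) ^ 2 := by ring
      rw [this]
      positivity
    by_cases hu0 : u = 0
    · -- x = l • s, l ≠ 0
      have hxls : x = l • s := by
        have := hu0
        rw [hudef, sub_eq_zero] at this
        exact this
      have hl : l ≠ 0 := by
        intro h0
        apply hx
        rw [hxls, h0, zero_smul]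
      have : x ⬝ᵥ y * (y ⬝ᵥ x) = l ^ 2 * (y ⬝ᵥ s) ^ 2 := by
        rw [hxls]
        simp [smul_dotProduct, dotProduct_smul, dotProduct_comm s y, smul_eq_mul]
        ring
      rw [hu0, this]
      have h2 : (0 : ℝ) < 1 / (y ⬝ᵥ s) * (l ^ 2 * (y ⬝ᵥ s) ^ 2) := by
        have hl2 : 0 < l ^ 2 := by rcases hl.lt_or_gt with h | h <;> nlinarith
        positivity
      simpa using h2
    · have h1 : 0 < u ⬝ᵥ P *ᵥ u := hquad u hu0
      linarith

lemma bfgs_trace {n : ℕ} {P : Matrix (Fin n) (Fin n) ℝ} (hP : P.PosDef)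
    {s y : Fin n → ℝ} (hs : s ≠ 0) (hsy : 0 < y ⬝ᵥ s) {M : ℝ}
    (hyM : (y ⬝ᵥ y) / (y ⬝ᵥ s) ≤ M) :
    (bfgsUpd P s y).trace ≤ P.trace + M := by
  have ha : 0 < s ⬝ᵥ P *ᵥ s := by
    have := hP.dotProduct_mulVec_pos hs; simpa using this
  have htr : (bfgsUpd P s y).trace
      = P.trace - (1 / (s ⬝ᵥ P *ᵥ s)) * ((P *ᵥ s) ⬝ᵥ (P *ᵥ s))
        + (1 / (y ⬝ᵥ s)) * (y ⬝ᵥ y) := by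
    simp [bfgsUpd, trace_add, trace_sub, trace_smul, myTraceVecMulVec, smul_eq_mul]
  rw [htr]
  have h1 : 0 ≤ (1 / (s ⬝ᵥ P *ᵥ s)) * ((P *ᵥ s) ⬝ᵥ (P *ᵥ s)) := by
    have := myDotSelfNonneg (P *ᵥ s)
    positivity
  have h2 : (1 / (y ⬝ᵥ s)) * (y ⬝ᵥ y) ≤ M := by
    rw [one_div, inv_mul_eq_div]
    exact hyM
  linarith

set_option maxHeartbeats 1000000 in
/-- BFGS (direct Hessian-approximation) updates starting from `B 0 = c • I`
with `0 < c ≤ M`, using pairs `(s j, y j)` with `s j ≠ 0`, `s jᵀ y j > 0` and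
`‖y j‖²/(y jᵀ s j) ≤ M`, produce symmetric positive definite matrices with
`Trace (B m) ≤ (m+n) M`; consequently every (real) eigenvalue of `B m` is at most `(m+n) M`. -/
theorem stmt17 (n m : ℕ) (hn : 1 ≤ n) (hm : 1 ≤ m) (M c : ℝ)
    (hM : 0 < M) (hc : 0 < c) (hcM : c ≤ M)
    (B : ℕ → Matrix (Fin n) (Fin n) ℝ) (s y : ℕ → Fin n → ℝ)
    (hB0 : B 0 = c • (1 : Matrix (Fin n) (Fin n) ℝ))
    (hs : ∀ j, 1 ≤ j → j ≤ m → s j ≠ 0)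
    (hsy : ∀ j, 1 ≤ j → j ≤ m → 0 < s j ⬝ᵥ y j)
    (hyM : ∀ j, 1 ≤ j → j ≤ m → (y j ⬝ᵥ y j) / (y j ⬝ᵥ s j) ≤ M)
    (hrec : ∀ j, 1 ≤ j → j ≤ m →
      B j = B (j - 1)
        - (1 / (s j ⬝ᵥ (B (j - 1)).mulVec (s j))) •
            Matrix.vecMulVec ((B (j - 1)).mulVec (s j)) (Matrix.vecMul (s j) (B (j - 1)))
        + (1 / (y j ⬝ᵥ s j)) • Matrix.vecMulVec (y j) (y j)) :
    (∀ j, j ≤ m → (B j).PosDef) ∧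
      (B m).trace ≤ ((m : ℝ) + n) * M ∧
      ∀ t ∈ spectrum ℝ (B m), t ≤ ((m : ℝ) + n) * M := by
  -- first main induction
  have hB0pd : (B 0).PosDef := by
    rw [hB0]
    refine Matrix.PosDef.of_dotProduct_mulVec_pos ?_ ?_
    · show (c • (1 : Matrix (Fin n) (Fin n) ℝ))ᴴ = _
      simp
    · intro x hx
      have : star x ⬝ᵥ (c • (1 : Matrix (Fin n) (Fin n) ℝ)) *ᵥ x = c * (x ⬝ᵥ x) := by
        simp [smul_mulVec, dotProduct_smul, smul_eq_mul]
      rw [this]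
      have hxx : 0 < x ⬝ᵥ x := by
        rcases Function.ne_iff.mp hx with ⟨i, hi⟩
        have : 0 < x i * x i := mul_self_pos.mpr hi
        exact lt_of_lt_of_le this (Finset.single_le_sum
          (f := fun k => x k * x k) (fun k _ => mul_self_nonneg _) (Finset.mem_univ i))
      positivity
  have key : ∀ j, j ≤ m → (B j).PosDef ∧ (B j).trace ≤ (n : ℝ) * c + j * M := by
    intro j
    induction j with
    | zero =>
      intro _
      refine ⟨hB0pd, ?_⟩
      rw [hB0]
      simp [trace_smul, smul_eq_mul, mul_comm]
    | succ k ih =>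
      intro hk
      have hk' : k ≤ m := Nat.le_of_succ_le hk
      obtain ⟨hpd, htr⟩ := ih hk'
      have h1 : 1 ≤ k + 1 := Nat.le_add_left 1 k
      have hrec' := hrec (k + 1) h1 hk
      simp only [Nat.add_sub_cancel] at hrec'
      have hsne := hs (k + 1) h1 hk
      have hys : 0 < y (k + 1) ⬝ᵥ s (k + 1) := by
        have := hsy (k + 1) h1 hk
        rwa [dotProduct_comm] at this
      have hEq : B (k + 1) = bfgsUpd (B k) (s (k + 1)) (y (k + 1)) := by
        rw [hrec', bfgsUpd, myVecMulEq hpd.1]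
      constructor
      · rw [hEq]; exact bfgs_posDef hpd hsne hys
      · rw [hEq]
        have := bfgs_trace hpd hsne hys (hyM (k + 1) h1 hk)
        push_cast
        linarith
  have hpdm := (key m le_rfl).1
  have htrace : (B m).trace ≤ ((m : ℝ) + n) * M := by
    have := (key m le_rfl).2
    have hnc : (n : ℝ) * c ≤ n * M := by
      have : (0 : ℝ) ≤ n := Nat.cast_nonneg n
      nlinarith
    nlinarith
  refine ⟨fun j hj => (key j hj).1, htrace, ?_⟩
  -- eigenvalue bound
  intro t ht
  have hA : (B m).IsHermitian := hpdm.1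
  rw [hA.spectrum_real_eq_range_eigenvalues] at ht
  obtain ⟨i, hi⟩ := ht
  have htr_eq : (B m).trace = ∑ k, hA.eigenvalues k := by
    simpa using hA.trace_eq_sum_eigenvalues
  have hle : hA.eigenvalues i ≤ ∑ k, hA.eigenvalues k :=
    Finset.single_le_sum (fun k _ => (hpdm.eigenvalues_pos k).le) (Finset.mem_univ i)
  calc t = hA.eigenvalues i := hi.symm
    _ ≤ ∑ k, hA.eigenvalues k := hle
    _ = (B m).trace := htr_eq.symm
    _ ≤ ((m : ℝ) + n) * M := htrace
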